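/- Let f : ℝ → S¹ be a pre-periodic function and f̃ : ℝ → ℝ a lift of f. Let 0 < ε < 1/8 and let g : ℝ → S¹ be a pre-periodic function with sup_{x ∈ ℝ} |g(x) − f(x)| < ε. Then there exists a unique lift g̃ : ℝ → ℝ of g such that sup_{x ∈ ℝ} |g̃(x) − f̃(x)| < ε/4. -/

import Mathlib

open Filter

/-- A continuous function `f : ℝ → ℂ` taking values in the unit circle `S¹` is *pre-periodic*
if for every `ε > 0` there is a positive integer `N` such that
`|f (x + k * N) - f x| < ε` for all integers `k` and all real `x`. -/
def PrePeriodic (f : ℝ → ℂ) : Prop :=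
  Continuous f ∧ (∀ x : ℝ, ‖f x‖ = 1) ∧
    ∀ ε : ℝ, 0 < ε → ∃ N : ℕ, 0 < N ∧
      ∀ (k : ℤ) (x : ℝ), ‖f (x + (k : ℝ) * (N : ℝ)) - f x‖ < ε

/-- `F : ℝ → ℝ` is a lift of `f : ℝ → S¹ ⊆ ℂ` if `F` is continuous and
`f x = e^{2 π i F x}` for all `x`. -/
def IsLift (f : ℝ → ℂ) (F : ℝ → ℝ) : Prop :=
  Continuous F ∧ ∀ x : ℝ, f x = Complex.exp (2 * Real.pi * Complex.I * (F x : ℂ))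

/-- Let `f` be a pre-periodic function with lift `F`, let `0 < ε < 1/8`, and let `g` be a
pre-periodic function with `sup_x |g x - f x| < ε`.  Then there is a unique lift `G` of `g`
with `sup_x |G x - F x| < ε / 4`. -/
theorem preperiodic_close_lift (f g : ℝ → ℂ) (F : ℝ → ℝ) (ε : ℝ)
    (hf : PrePeriodic f) (hF : IsLift f F) (hε0 : 0 < ε) (hε : ε < 1 / 8)
    (hg : PrePeriodic g) (hfg : (⨆ x : ℝ, ‖g x - f x‖) < ε) :
    ∃! G : ℝ → ℝ, IsLift g G ∧ (⨆ x : ℝ, |G x - F x|) < ε / 4 := by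
  obtain ⟨hfc, hfnorm, -⟩ := hf
  obtain ⟨hgc, hgnorm, -⟩ := hg
  obtain ⟨hFc, hFlift⟩ := hF
  have hπ : (0:ℝ) < Real.pi := Real.pi_pos
  set δ := ⨆ x : ℝ, ‖g x - f x‖ with hδdef
  have hbdd : BddAbove (Set.range fun x => ‖g x - f x‖) := by
    refine ⟨2, ?_⟩
    rintro _ ⟨x, rfl⟩
    calc ‖g x - f x‖ ≤ ‖g x‖ + ‖f x‖ := norm_sub_le _ _
      _ = 2 := by rw [hfnorm, hgnorm]; norm_num
  have hpt : ∀ x, ‖g x - f x‖ ≤ δ := fun x => le_ciSup hbdd x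
  have hδ0 : 0 ≤ δ := le_trans (norm_nonneg _) (hpt 0)
  have hδε : δ < ε := hfg
  have hf0 : ∀ x, f x ≠ 0 := by
    intro x hx
    have := hfnorm x
    rw [hx] at this; simp at this
  set h : ℝ → ℂ := fun x => g x / f x with hhdef
  have hhnorm : ∀ x, ‖h x‖ = 1 := by
    intro x
    simp only [hhdef, norm_div]
    rw [hfnorm, hgnorm]
    norm_num
  have hh1 : ∀ x, ‖h x - 1‖ ≤ δ := by
    intro x
    have : h x - 1 = (g x - f x) / f x := by
      show g x / f x - 1 = _
      rw [eq_div_iff (hf0 x), sub_mul, div_mul_cancel₀ _ (hf0 x), one_mul]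
    rw [this, norm_div, show ‖f x‖ = 1 from hfnorm x, div_one]
    exact hpt x
  have hre : ∀ x, 0 < (h x).re := by
    intro x
    have h1 : |(h x - 1).re| ≤ ‖h x - 1‖ := Complex.abs_re_le_norm _
    have h2 : (h x - 1).re = (h x).re - 1 := by simp
    have := hh1 x
    have : |(h x).re - 1| ≤ δ := by rw [← h2]; linarith [h1]
    have := abs_le.mp this
    linarith
  -- pointwise bound on arg
  have harg : ∀ x, |Complex.arg (h x)| ≤ Real.pi * δ / 2 := by
    intro x
    have hlt : |Complex.arg (h x)| < Real.pi / 2 :=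
      Complex.abs_arg_lt_pi_div_two_iff.mpr (Or.inl (hre x))
    have hsin : Real.sin (Complex.arg (h x)) = (h x).im := by
      rw [Complex.sin_arg, hhnorm, div_one]
    have him : |(h x).im| ≤ δ := by
      have : (h x).im = (h x - 1).im := by simp
      rw [this]
      exact le_trans (Complex.abs_im_le_norm _) (hh1 x)
    have hjordan : 2 / Real.pi * |Complex.arg (h x)| ≤ Real.sin |Complex.arg (h x)| :=
      Real.mul_le_sin (abs_nonneg _) hlt.le
    have hsabs : Real.sin |Complex.arg (h x)| = |Real.sin (Complex.arg (h x))| := by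
      rcases abs_choice (Complex.arg (h x)) with h' | h'
      · rw [h']
        rw [abs_of_nonneg]
        apply Real.sin_nonneg_of_nonneg_of_le_pi
        · rw [← h']; exact abs_nonneg _
        · rw [← h']; linarith [hlt.le]
      · rw [h', Real.sin_neg, abs_of_nonpos]
        apply Real.sin_nonpos_of_nonpos_of_neg_pi_le
        · nlinarith [abs_nonneg (Complex.arg (h x)), h']
        · nlinarith [hlt.le, h']
    have : 2 / Real.pi * |Complex.arg (h x)| ≤ δ := by
      rw [hsabs, hsin] at hjordan
      exact le_trans hjordan him
    calc |Complex.arg (h x)| = Real.pi / 2 * (2 / Real.pi * |Complex.arg (h x)|) := by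
          field_simp
      _ ≤ Real.pi / 2 * δ := by
          apply mul_le_mul_of_nonneg_left this (by positivity)
      _ = Real.pi * δ / 2 := by ring
  set G : ℝ → ℝ := fun x => F x + Complex.arg (h x) / (2 * Real.pi) with hGdef
  have hGpt : ∀ x, |G x - F x| ≤ δ / 4 := by
    intro x
    have : G x - F x = Complex.arg (h x) / (2 * Real.pi) := by simp [hGdef]
    rw [this, abs_div, abs_of_pos (by positivity : (0:ℝ) < 2 * Real.pi),
      div_le_iff₀ (by positivity : (0:ℝ) < 2 * Real.pi)]
    calc |Complex.arg (h x)| ≤ Real.pi * δ / 2 := harg x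
      _ = δ / 4 * (2 * Real.pi) := by ring
  have hhc : Continuous h := hgc.div hfc hf0
  have hGc : Continuous G := by
    apply hFc.add
    apply Continuous.div_const
    rw [continuous_iff_continuousAt]
    intro x
    exact (Complex.continuousAt_arg (Or.inl (hre x))).comp hhc.continuousAt
  have hGlift : ∀ x, g x = Complex.exp (2 * Real.pi * Complex.I * (G x : ℂ)) := by
    intro x
    have hexp : Complex.exp ((Complex.arg (h x) : ℂ) * Complex.I) = h x := by
      have := Complex.norm_mul_exp_arg_mul_I (h x)
      rwa [hhnorm, Complex.ofReal_one, one_mul] at this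
    have : 2 * (Real.pi : ℂ) * Complex.I * ((G x : ℝ) : ℂ)
        = 2 * Real.pi * Complex.I * (F x : ℂ) + (Complex.arg (h x) : ℂ) * Complex.I := by
      rw [hGdef]
      push_cast
      have : (Real.pi : ℂ) ≠ 0 := by exact_mod_cast hπ.ne'
      field_simp
    rw [this, Complex.exp_add, ← hFlift, hexp]
    show g x = f x * (g x / f x)
    rw [mul_comm, div_mul_cancel₀ _ (hf0 x)]
  have hGsup : (⨆ x : ℝ, |G x - F x|) < ε / 4 := by
    have : (⨆ x : ℝ, |G x - F x|) ≤ δ / 4 := ciSup_le hGpt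
    linarith
  refine ⟨G, ⟨⟨hGc, hGlift⟩, hGsup⟩, ?_⟩
  rintro G' ⟨⟨hG'c, hG'lift⟩, hG'sup⟩
  -- G' - G is integer valued
  have hint : ∀ x, ∃ n : ℤ, G' x - G x = n := by
    intro x
    have hex : Complex.exp (2 * Real.pi * Complex.I * (G' x : ℂ))
        = Complex.exp (2 * Real.pi * Complex.I * (G x : ℂ)) := by
      rw [← hG'lift, ← hGlift]
    rw [Complex.exp_eq_exp_iff_exists_int] at hex
    obtain ⟨n, hn⟩ := hex
    refine ⟨n, ?_⟩
    have h2πI : (2 * (Real.pi : ℂ) * Complex.I) ≠ 0 := by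
      simp [Complex.I_ne_zero, Real.pi_ne_zero]
    have : (2 * (Real.pi : ℂ) * Complex.I) * ((G' x : ℂ))
        = (2 * (Real.pi : ℂ) * Complex.I) * (((G x : ℂ)) + n) := by
      rw [mul_add]
      linear_combination hn
    have h3 := mul_left_cancel₀ h2πI this
    have h4 : (G' x : ℂ) - (G x : ℂ) = (n : ℂ) := by rw [h3]; ring
    exact_mod_cast h4
  -- constancy via IVT
  have hdc : Continuous fun x => G' x - G x := hG'c.sub hGc
  have hconst : ∀ x, G' x - G x = G' 0 - G 0 := by
    intro x
    by_contra hne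
    obtain ⟨n, hn⟩ := hint x
    obtain ⟨m, hm⟩ := hint 0
    have hmn : m ≠ n := fun h' => hne (by rw [hn, hm, h'])
    have key : ∀ v : ℝ, v ∈ Set.uIcc ((m:ℝ)) ((n:ℝ)) → ∃ k : ℤ, (k:ℝ) = v := by
      intro v hv
      have hv' : v ∈ Set.uIcc ((fun x => G' x - G x) 0) ((fun x => G' x - G x) x) := by
        simpa [hm, hn] using hv
      obtain ⟨y, -, hy⟩ := intermediate_value_uIcc
        (f := fun x => G' x - G x) (a := (0:ℝ)) (b := x) hdc.continuousOn hv'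
      obtain ⟨k, hk⟩ := hint y
      exact ⟨k, by rw [← hk]; simpa using hy⟩
    rcases lt_or_gt_of_ne hmn with hlt | hlt
    · have h1 : (m:ℝ) + 1 ≤ (n:ℝ) := by exact_mod_cast Int.add_one_le_iff.mpr hlt
      obtain ⟨k, hk⟩ := key ((m:ℝ) + 1/2)
        (Set.mem_uIcc.mpr (Or.inl ⟨by linarith, by linarith⟩))
      have h2 : ((2*(k-m) : ℤ) : ℝ) = 1 := by push_cast; linarith
      have h3 : (2*(k-m) : ℤ) = 1 := by exact_mod_cast h2
      omega
    · have h1 : (n:ℝ) + 1 ≤ (m:ℝ) := by exact_mod_cast Int.add_one_le_iff.mpr hlt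
      obtain ⟨k, hk⟩ := key ((n:ℝ) + 1/2)
        (Set.mem_uIcc.mpr (Or.inr ⟨by linarith, by linarith⟩))
      have h2 : ((2*(k-n) : ℤ) : ℝ) = 1 := by push_cast; linarith
      have h3 : (2*(k-n) : ℤ) = 1 := by exact_mod_cast h2
      omega
  -- now show the constant is zero
  obtain ⟨m, hm⟩ := hint 0
  have hG'bdd : BddAbove (Set.range fun x => |G' x - F x|) := by
    refine ⟨|(m:ℝ)| + δ/4, ?_⟩
    rintro _ ⟨x, rfl⟩
    have hx : G' x - G x = (m:ℝ) := by rw [hconst x, hm]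
    calc |G' x - F x| = |(G' x - G x) + (G x - F x)| := by congr 1; ring
      _ ≤ |G' x - G x| + |G x - F x| := abs_add_le _ _
      _ ≤ |(m:ℝ)| + δ/4 := by rw [hx]; linarith [hGpt x]
  have hG'pt : |G' 0 - F 0| ≤ ⨆ x : ℝ, |G' x - F x| := le_ciSup hG'bdd 0
  have hm0 : m = 0 := by
    have h1 : |(m:ℝ)| < 1 := by
      have : |(m:ℝ)| = |(G' 0 - F 0) - (G 0 - F 0)| := by rw [← hm]; congr 1; ring
      rw [this]
      calc |(G' 0 - F 0) - (G 0 - F 0)| ≤ |G' 0 - F 0| + |G 0 - F 0| := by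
            rw [sub_eq_add_neg]
            exact (abs_add_le _ _).trans (by rw [abs_neg])
        _ < ε/4 + δ/4 := by
            have := hGpt 0
            have := lt_of_le_of_lt hG'pt hG'sup
            linarith
        _ < 1 := by linarith
    have h2 : |m| < 1 := by exact_mod_cast h1
    rcases abs_lt.mp h2 with ⟨ha, hb⟩
    omega
  funext x
  have := hconst x
  rw [hm, hm0] at this
  push_cast at this
  linarith
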